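/- Let G be a simple loony endgame consisting only of chains (each of length ≥ 3), with lengths c_1, ..., c_n (n ≥ 1), and set c = 4 + Σ_{i=1}^n (c_i - 4). Then v(G) = c if c ≥ 1, and if c ≤ 0 then v(G) ∈ {1, 2} with v(G) ≡ c (mod 2). -/

import Mathlib

/-- A component of a dots-and-boxes endgame: a chain or a loop, with an integer length. -/
inductive Comp : Type
  | chain (c : ℤ) : Comp
  | loop (l : ℤ) : Comp
  deriving DecidableEq

/-- The length (number of boxes) of a component. -/
def Comp.len : Comp → ℤ
  | .chain c => c
  | .loop l => l

/-- A simple loony endgame: a multiset of chains of length ≥ 3 and loops of even length ≥ 4. -/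
def IsSimpleLoony (G : Multiset Comp) : Prop :=
  ∀ p ∈ G, match p with
    | .chain c => 3 ≤ c
    | .loop l => 4 ≤ l ∧ Even l

/-- Fuel-indexed value function. -/
noncomputable def vAux : ℕ → Multiset Comp → ℤ
  | 0, _ => 0
  | n + 1, G =>
    if G = 0 then 0
    else sInf { x : ℤ | ∃ p ∈ G,
      x = match p with
        | Comp.chain c => c - 2 + |vAux n (G.erase p) - 2|
        | Comp.loop l => l - 4 + |vAux n (G.erase p) - 4| }

/-- The value of a simple loony endgame: 0 on the empty game; on a nonempty game, the
minimum over components of `c - 2 + |v(G∖{c}) - 2|` for a chain of length `c` and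
`ℓ - 4 + |v(G∖{ℓ}) - 4|` for a loop of length `ℓ`. -/
noncomputable def v (G : Multiset Comp) : ℤ := vAux (Multiset.card G) G

/-- The fully controlled value: Σ_chains (c - 4) + Σ_loops (ℓ - 8). -/
def fcv (G : Multiset Comp) : ℤ :=
  (G.map (fun p => match p with
    | Comp.chain c => c - 4
    | Comp.loop l => l - 8)).sum

/-- The terminal bonus. -/
noncomputable def tb (G : Multiset Comp) : ℤ :=
  open Classical in
  if G = 0 then 0
  else if (∃ c, 4 ≤ c ∧ Comp.chain c ∈ G) ∨ (∀ l, Comp.loop l ∉ G) then 4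
  else if ∀ c, Comp.chain c ∉ G then 8
  else 6

/-- The controlled value. -/
noncomputable def cv (G : Multiset Comp) : ℤ := fcv G + tb G

private lemma chain_inj : Function.Injective Comp.chain := fun a b h => by cases h; rfl

private lemma vAux_stable : ∀ (n : ℕ) (G : Multiset Comp), Multiset.card G ≤ n →
    vAux (n + 1) G = vAux n G := by
  intro n
  induction n with
  | zero =>
    intro G hG
    have h0 : G = 0 := Multiset.card_eq_zero.mp (Nat.le_zero.mp hG)
    simp [h0, vAux]
  | succ m ih =>
    intro G hG
    by_cases h0 : G = 0
    · simp [h0, vAux]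
    · show vAux (m + 1 + 1) G = vAux (m + 1) G
      rw [vAux, vAux, if_neg h0, if_neg h0]
      congr 1
      ext x
      have hcard : ∀ p ∈ G, Multiset.card (G.erase p) ≤ m := by
        intro p hp
        rw [Multiset.card_erase_of_mem hp, Nat.pred_eq_sub_one]
        have : 1 ≤ Multiset.card G := Multiset.card_pos.mpr h0
        omega
      constructor <;> rintro ⟨p, hp, hx⟩ <;> refine ⟨p, hp, ?_⟩ <;>
        cases p <;> simp only [ih _ (hcard _ hp)] at hx ⊢ <;> exact hx

private lemma v_def (G : Multiset Comp) (h : G ≠ 0) :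
    v G = sInf { x : ℤ | ∃ p ∈ G,
      x = match p with
        | Comp.chain c => c - 2 + |v (G.erase p) - 2|
        | Comp.loop l => l - 4 + |v (G.erase p) - 4| } := by
  obtain ⟨k, hk⟩ : ∃ k, Multiset.card G = k + 1 := by
    have : 1 ≤ Multiset.card G := Multiset.card_pos.mpr h
    exact ⟨Multiset.card G - 1, by omega⟩
  rw [v, hk, vAux, if_neg h]
  congr 1
  ext x
  have hcard : ∀ p ∈ G, vAux k (G.erase p) = v (G.erase p) := by
    intro p hp
    rw [v, Multiset.card_erase_of_mem hp, hk, Nat.pred_succ]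
  constructor <;> rintro ⟨p, hp, hx⟩ <;> refine ⟨p, hp, ?_⟩ <;>
    cases p <;> simp only [hcard _ hp] at hx ⊢ <;> exact hx

private lemma v_chains (C : Multiset ℤ) (h : C ≠ 0) :
    v (C.map Comp.chain) = sInf { x : ℤ | ∃ a ∈ C,
      x = a - 2 + |v ((C.erase a).map Comp.chain) - 2| } := by
  rw [v_def _ (by simpa using h)]
  congr 1
  ext x
  simp only [Set.mem_setOf_eq]
  constructor
  · rintro ⟨p, hp, hx⟩
    obtain ⟨a, ha, rfl⟩ := Multiset.mem_map.mp hp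
    refine ⟨a, ha, ?_⟩
    rw [hx, ← Multiset.map_erase _ chain_inj]
  · rintro ⟨a, ha, hx⟩
    refine ⟨Comp.chain a, Multiset.mem_map_of_mem _ ha, ?_⟩
    rw [hx, ← Multiset.map_erase _ chain_inj]

private def fval (c : ℤ) : ℤ := if 1 ≤ c then c else if Even c then 2 else 1

private def cval (C : Multiset ℤ) : ℤ := 4 + (C.map (fun x => x - 4)).sum

private lemma cval_erase (C : Multiset ℤ) (a : ℤ) (ha : a ∈ C) :
    cval (C.erase a) = cval C - a + 4 := by
  have h : C = a ::ₘ C.erase a := (Multiset.cons_erase ha).symm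
  rw [cval, cval]
  nth_rewrite 2 [h]
  rw [Multiset.map_cons, Multiset.sum_cons]
  ring

private lemma arith1 (a c : ℤ) (ha : 3 ≤ a) :
    a - 2 + |fval (c - a + 4) - 2| =
      if a ≤ c + 2 then c else if Even (c - a) then a - 2 else a - 1 := by
  rcases abs_cases (fval (c - a + 4) - 2) with ⟨h1, h2⟩ | ⟨h1, h2⟩ <;>
    rw [h1] <;> unfold fval at * <;>
    split_ifs at * <;>
    first
      | omega
      | (simp only [Int.even_iff, Int.even_sub, Int.even_add] at *; omega)

private lemma arith2 (a c : ℤ) (ha : 3 ≤ a) :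
    fval c ≤ if a ≤ c + 2 then c else if Even (c - a) then a - 2 else a - 1 := by
  unfold fval
  split_ifs <;> simp -failIfUnchanged only [Int.even_iff, Int.even_sub] at * <;> omega

private lemma main : ∀ (n : ℕ) (C : Multiset ℤ), Multiset.card C ≤ n → C ≠ 0 →
    (∀ a ∈ C, 3 ≤ a) → v (C.map Comp.chain) = fval (cval C) := by
  intro n
  induction n with
  | zero =>
    intro C hcard h0 _
    exact absurd (Multiset.card_eq_zero.mp (Nat.le_zero.mp hcard)) h0
  | succ m ih =>
    intro C hcard h0 h3
    set c := cval C with hc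
    rw [v_chains C h0]
    have key : ∀ a ∈ C, a - 2 + |v ((C.erase a).map Comp.chain) - 2| =
        if a ≤ c + 2 then c else if Even (c - a) then a - 2 else a - 1 := by
      intro a ha
      have ha3 := h3 a ha
      by_cases he : C.erase a = 0
      · have hCa : C = {a} := by rw [← Multiset.cons_erase ha, he]; rfl
        have hceq : c = a := by rw [hc, hCa]; simp [cval]
        rw [he]
        have hv0 : v ((0 : Multiset ℤ).map Comp.chain) = 0 := by simp [v, vAux]
        rw [hv0]
        rw [if_pos (by omega : a ≤ c + 2)]
        rw [show |(0:ℤ) - 2| = 2 by norm_num]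
        omega
      · have hcard' : Multiset.card (C.erase a) ≤ m := by
          rw [Multiset.card_erase_of_mem ha, Nat.pred_eq_sub_one]
          have : 1 ≤ Multiset.card C := Multiset.card_pos.mpr h0
          omega
        have h3' : ∀ b ∈ C.erase a, 3 ≤ b := fun b hb => h3 b (Multiset.mem_of_mem_erase hb)
        rw [ih (C.erase a) hcard' he h3', cval_erase C a ha, ← hc]
        exact arith1 a c ha3
    have hlb : ∀ x ∈ { x : ℤ | ∃ a ∈ C, x = a - 2 + |v ((C.erase a).map Comp.chain) - 2| },
        fval c ≤ x := by
      rintro x ⟨a, ha, rfl⟩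
      rw [key a ha]
      exact arith2 a c (h3 a ha)
    have hmem : fval c ∈ { x : ℤ | ∃ a ∈ C, x = a - 2 + |v ((C.erase a).map Comp.chain) - 2| } := by
      by_cases hc1 : 1 ≤ c
      · -- find a ∈ C with a ≤ c + 2
        obtain ⟨a, ha, hale⟩ : ∃ a ∈ C, a ≤ c + 2 := by
          by_contra hno
          push_neg at hno
          obtain ⟨a0, ha0⟩ := Multiset.exists_mem_of_ne_zero h0
          have hnn : ∀ y ∈ C.map (fun x => x - 4), 0 ≤ y := by
            intro y hy
            obtain ⟨b, hb, rfl⟩ := Multiset.mem_map.mp hy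
            have := hno b hb
            omega
          have hle : a0 - 4 ≤ (C.map (fun x => x - 4)).sum :=
            Multiset.single_le_sum hnn _ (Multiset.mem_map_of_mem _ ha0)
          have := hno a0 ha0
          have : c = 4 + (C.map (fun x => x - 4)).sum := hc
          omega
        refine ⟨a, ha, ?_⟩
        rw [key a ha, if_pos hale, fval, if_pos hc1]
      · -- c ≤ 0 : find a 3-chain
        obtain ⟨a, ha, hae⟩ : ∃ a ∈ C, a = 3 := by
          by_contra hno
          push_neg at hno
          have hnn : ∀ y ∈ C.map (fun x => x - 4), 0 ≤ y := by
            intro y hy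
            obtain ⟨b, hb, rfl⟩ := Multiset.mem_map.mp hy
            have h1 := h3 b hb
            have h2 := hno b hb
            omega
          have hsum : 0 ≤ (C.map (fun x => x - 4)).sum := Multiset.sum_nonneg hnn
          have : c = 4 + (C.map (fun x => x - 4)).sum := hc
          omega
        refine ⟨a, ha, ?_⟩
        rw [key a ha, if_neg (by omega), fval, if_neg hc1]
        subst hae
        by_cases hev : Even c <;>
          simp only [Int.even_iff, Int.even_sub] at * <;>
          split_ifs <;> omega
    exact le_antisymm (csInf_le ⟨fval c, hlb⟩ hmem) (le_csInf ⟨_, hmem⟩ hlb)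

theorem stmt2 (C : Multiset ℤ) (hC : C ≠ 0) (hc : ∀ c ∈ C, 3 ≤ c)
    (c : ℤ) (hdef : c = 4 + (C.map (fun x => x - 4)).sum) :
    (1 ≤ c → v (C.map Comp.chain) = c) ∧
    (c ≤ 0 → v (C.map Comp.chain) ∈ ({1, 2} : Set ℤ) ∧
      v (C.map Comp.chain) ≡ c [ZMOD 2]) := by
  have hcv : cval C = c := by rw [hdef, cval]
  have hmain := main (Multiset.card C) C le_rfl hC hc
  rw [hcv] at hmain
  constructor
  · intro h1
    rw [hmain, fval, if_pos h1]
  · intro h0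
    rw [hmain]
    unfold fval
    rw [if_neg (by omega)]
    constructor
    · split_ifs <;> simp
    · show _ % 2 = _ % 2
      by_cases hev : Even c <;>
        simp only [Int.even_iff] at * <;> split_ifs <;> omega
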